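/- For κ ∈ [1,2] and γ ∈ [1,2], the sup-norm regression loss L(u,y) = κ·‖u − y‖_∞^γ on ℝ^q × ℝ^q is (λ,θ)-self-bounding Lipschitz with θ = (γ−1)/γ and λ = (8κ)^{1−θ}: for all u, v, y ∈ ℝ^q, |L(u,y) − L(v,y)| ≤ λ·max{L(u,y), L(v,y)}^θ·‖u − v‖_∞. -/

import Mathlib

lemma rpow_sub_rpow_le_aux {a b γ : ℝ} (hb : 0 ≤ b) (hba : b ≤ a) (hγ : 1 ≤ γ) :
    a ^ γ - b ^ γ ≤ γ * a ^ (γ - 1) * (a - b) := by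
  rcases eq_or_lt_of_le hba with h | h
  · subst h; simp
  · obtain ⟨c, hc, hceq⟩ := exists_hasDerivAt_eq_slope (fun x => x ^ γ)
      (fun x => γ * x ^ (γ - 1)) h
      (fun x _ => (Real.hasDerivAt_rpow_const (Or.inr hγ)).continuousAt.continuousWithinAt)
      (fun x _ => Real.hasDerivAt_rpow_const (Or.inr hγ))
    have hc0 : 0 ≤ c := le_of_lt (lt_of_le_of_lt hb hc.1)
    have hab : a - b ≠ 0 := by linarith
    have heq : a ^ γ - b ^ γ = γ * c ^ (γ - 1) * (a - b) := by
      rw [hceq, div_mul_cancel₀ _ hab]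
    rw [heq]
    have hcle : c ^ (γ - 1) ≤ a ^ (γ - 1) :=
      Real.rpow_le_rpow hc0 (le_of_lt hc.2) (by linarith)
    gcongr

theorem sup_norm_regression_loss_self_bounding_lipschitz
    (q : ℕ) (hq : 0 < q) (κ γ : ℝ) (hκ1 : 1 ≤ κ) (hκ2 : κ ≤ 2) (hγ1 : 1 ≤ γ) (hγ2 : γ ≤ 2)
    (L : (Fin q → ℝ) → (Fin q → ℝ) → ℝ)
    (hL : ∀ u y, L u y = κ * ‖u - y‖ ^ γ)
    (θ lam : ℝ) (hθ : θ = (γ - 1) / γ) (hlam : lam = (8 * κ) ^ (1 - θ))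
    (u v y : Fin q → ℝ) :
    |L u y - L v y| ≤ lam * max (L u y) (L v y) ^ θ * ‖u - v‖ := by
  have hγ0 : (0:ℝ) < γ := by linarith
  have hκ0 : (0:ℝ) < κ := by linarith
  set a := ‖u - y‖ with ha'
  set b := ‖v - y‖ with hb'
  have ha : 0 ≤ a := norm_nonneg _
  have hb : 0 ≤ b := norm_nonneg _
  set M := max a b with hM'
  have hM0 : 0 ≤ M := le_trans ha (le_max_left _ _)
  have hd : |a - b| ≤ ‖u - v‖ := by
    calc |a - b| = |‖u - y‖ - ‖v - y‖| := rfl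
    _ ≤ ‖(u - y) - (v - y)‖ := abs_norm_sub_norm_le _ _
    _ = ‖u - v‖ := by rw [sub_sub_sub_cancel_right]
  have key : |a ^ γ - b ^ γ| ≤ γ * M ^ (γ - 1) * |a - b| := by
    rcases le_total a b with h | h
    · rw [abs_sub_comm, abs_sub_comm a b, hM', max_eq_right h,
        abs_of_nonneg (sub_nonneg.2 (Real.rpow_le_rpow ha h hγ0.le)),
        abs_of_nonneg (sub_nonneg.2 h)]
      exact rpow_sub_rpow_le_aux ha h hγ1
    · rw [hM', max_eq_left h,
        abs_of_nonneg (sub_nonneg.2 (Real.rpow_le_rpow hb h hγ0.le)),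
        abs_of_nonneg (sub_nonneg.2 h)]
      exact rpow_sub_rpow_le_aux hb h hγ1
  have hmax : max (L u y) (L v y) = κ * M ^ γ := by
    rw [hL, hL]
    rcases le_total a b with h | h
    · rw [hM', max_eq_right h,
        max_eq_right (mul_le_mul_of_nonneg_left (Real.rpow_le_rpow ha h hγ0.le) hκ0.le)]
    · rw [hM', max_eq_left h,
        max_eq_left (mul_le_mul_of_nonneg_left (Real.rpow_le_rpow hb h hγ0.le) hκ0.le)]
  have hγθ : γ * θ = γ - 1 := by rw [hθ]; field_simp
  have h1θ : 1 - θ = 1 / γ := by rw [hθ]; field_simp; ring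
  have hpow : (κ * M ^ γ) ^ θ = κ ^ θ * M ^ (γ - 1) := by
    rw [Real.mul_rpow hκ0.le (Real.rpow_nonneg hM0 γ), ← Real.rpow_mul hM0, hγθ]
  have hlam8 : lam = 8 ^ (1 - θ) * κ ^ (1 - θ) := by
    rw [hlam, Real.mul_rpow (by norm_num) hκ0.le]
  have hκθ : κ ^ (1 - θ) * κ ^ θ = κ := by
    rw [← Real.rpow_add hκ0]; norm_num
  have hγ8 : γ ≤ 8 ^ (1 - θ) := by
    have h4 : ((4:ℝ)) ^ (1/2:ℝ) = 2 := by
      rw [show (4:ℝ) = 2 ^ (2:ℕ) by norm_num, ← Real.rpow_natCast (2:ℝ) 2,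
        ← Real.rpow_mul (by norm_num : (0:ℝ) ≤ 2)]
      norm_num
    have h2 : (2:ℝ) ≤ 8 ^ (1/2 : ℝ) := by
      calc (2:ℝ) = (4:ℝ) ^ (1/2:ℝ) := h4.symm
        _ ≤ 8 ^ (1/2:ℝ) := Real.rpow_le_rpow (by norm_num : (0:ℝ) ≤ 4)
            (by norm_num : (4:ℝ) ≤ 8) (by norm_num : (0:ℝ) ≤ 1/2)
    have h3 : (8:ℝ) ^ (1/2:ℝ) ≤ 8 ^ (1 - θ) := by
      apply Real.rpow_le_rpow_of_exponent_le (by norm_num)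
      rw [h1θ]
      exact one_div_le_one_div_of_le hγ0 hγ2
    linarith
  have hPD : 0 ≤ κ * M ^ (γ - 1) * ‖u - v‖ :=
    mul_nonneg (mul_nonneg hκ0.le (Real.rpow_nonneg hM0 _)) (norm_nonneg _)
  calc |L u y - L v y| = κ * |a ^ γ - b ^ γ| := by
        rw [hL, hL, ← mul_sub, abs_mul, abs_of_pos hκ0]
    _ ≤ κ * (γ * M ^ (γ - 1) * |a - b|) := mul_le_mul_of_nonneg_left key hκ0.le
    _ ≤ κ * (γ * M ^ (γ - 1) * ‖u - v‖) := by
        apply mul_le_mul_of_nonneg_left _ hκ0.le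
        apply mul_le_mul_of_nonneg_left hd
        exact mul_nonneg hγ0.le (Real.rpow_nonneg hM0 _)
    _ = γ * (κ * M ^ (γ - 1) * ‖u - v‖) := by ring
    _ ≤ 8 ^ (1 - θ) * (κ * M ^ (γ - 1) * ‖u - v‖) := mul_le_mul_of_nonneg_right hγ8 hPD
    _ = 8 ^ (1 - θ) * κ ^ (1 - θ) * (κ ^ θ * M ^ (γ - 1)) * ‖u - v‖ := by
        conv_lhs => rw [← hκθ]
        ring
    _ = lam * max (L u y) (L v y) ^ θ * ‖u - v‖ := by rw [hmax, hpow, hlam8]
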